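/- Let F be a sparseness measure with cost function J_F on ℝⁿ, let 0 < p ≤ 1, suppose F is non-decreasing on [0,∞) and t ↦ F(t)/t^p is non-increasing on (0,∞), and let k ≥ 1. Then: (i) every linear subspace ν of ℝⁿ satisfying NSP at sparsity k for the ℓ_p cost function J(x) = ∑_{i=1}^n |x_i|^p also satisfies NSP at sparsity k for J_F; and (ii) every m×n real matrix A that satisfies RRC at sparsity k for the ℓ_p cost function with some constant also satisfies RRC at sparsity k for J_F with some constant. -/

import Mathlib

noncomputable section

/-- `F : ℝ → ℝ` is a sparseness measure: nonnegative on `[0,∞)`,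
vanishing exactly at `0`, and `F (|·|)` is subadditive on `ℝ`. -/
def SparsenessMeasure (F : ℝ → ℝ) : Prop :=
  (∀ t : ℝ, 0 ≤ t → 0 ≤ F t) ∧
  (∀ t : ℝ, 0 ≤ t → (F t = 0 ↔ t = 0)) ∧
  (∀ x y : ℝ, F |x + y| ≤ F |x| + F |y|)

/-- The cost function `J(x) = ∑ i, F |x i|` on `ℝⁿ`. -/
def costJ {n : ℕ} (F : ℝ → ℝ) (x : EuclideanSpace ℝ (Fin n)) : ℝ :=
  ∑ i, F |x i|

/-- The restricted cost `J(x_T) = ∑ i ∈ T, F |x i|`. -/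
def costJT {n : ℕ} (F : ℝ → ℝ) (T : Finset (Fin n)) (x : EuclideanSpace ℝ (Fin n)) : ℝ :=
  ∑ i ∈ T, F |x i|

/-- `x` has at most `k` nonzero entries. -/
def Sparse {n : ℕ} (k : ℕ) (x : EuclideanSpace ℝ (Fin n)) : Prop :=
  ∃ T : Finset (Fin n), T.card ≤ k ∧ ∀ i ∉ T, x i = 0

/-- The matrix `A` acting as a continuous linear map between Euclidean spaces. -/
def mulVecCLM {m n : ℕ} (A : Matrix (Fin m) (Fin n) ℝ) :
    EuclideanSpace ℝ (Fin n) →L[ℝ] EuclideanSpace ℝ (Fin m) :=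
  (((EuclideanSpace.equiv (Fin m) ℝ).symm : (Fin m → ℝ) →L[ℝ] EuclideanSpace ℝ (Fin m)).comp
    (Matrix.mulVecLin A).toContinuousLinearMap).comp
    ((EuclideanSpace.equiv (Fin n) ℝ) : EuclideanSpace ℝ (Fin n) →L[ℝ] (Fin n → ℝ))

/-- `A` satisfies the robust recovery condition at sparsity `k` for the cost `J_F`
with constant `C`: for every `k`-sparse `x̄`, every `ε > 0`, every noise `v` with
`‖v‖ ≤ ε`, and every feasible `x̂` with `J(x̂) ≤ J(x̄)`, one has `‖x̄ - x̂‖ ≤ C ε`. -/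
def RRC {m n : ℕ} (A : Matrix (Fin m) (Fin n) ℝ) (k : ℕ) (F : ℝ → ℝ) (C : ℝ) : Prop :=
  ∀ xbar : EuclideanSpace ℝ (Fin n), Sparse k xbar →
    ∀ ε : ℝ, 0 < ε →
      ∀ v : EuclideanSpace ℝ (Fin m), ‖v‖ ≤ ε →
        ∀ xhat : EuclideanSpace ℝ (Fin n),
          ‖mulVecCLM A xhat - (mulVecCLM A xbar + v)‖ ≤ ε →
            costJ F xhat ≤ costJ F xbar → ‖xbar - xhat‖ ≤ C * ε

/-- The robust null space condition with parameter `d` for `(A, k, J_F)`. -/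
def RNSP {m n : ℕ} (A : Matrix (Fin m) (Fin n) ℝ) (k : ℕ) (F : ℝ → ℝ) (d : ℝ) : Prop :=
  ∀ z ∈ LinearMap.ker (mulVecCLM A).toLinearMap, z ≠ 0 →
    ∀ η : EuclideanSpace ℝ (Fin n), ‖η‖ < d * ‖z‖ →
      ∀ T : Finset (Fin n), T.card ≤ k →
        costJT F T (z + η) < costJT F Tᶜ (z + η)

/-- The subspace `ν` satisfies the null space property at sparsity `k` for `J_F`. -/
def NSP {n : ℕ} (ν : Submodule ℝ (EuclideanSpace ℝ (Fin n))) (k : ℕ) (F : ℝ → ℝ) : Prop :=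
  ∀ z ∈ ν, z ≠ 0 → ∀ T : Finset (Fin n), T.card ≤ k → costJT F T z < costJT F Tᶜ z

/-- The orthogonal projection onto `ν`, as a continuous linear map `ℝⁿ → ℝⁿ`. -/
def projCLM {n : ℕ} (ν : Submodule ℝ (EuclideanSpace ℝ (Fin n))) :
    EuclideanSpace ℝ (Fin n) →L[ℝ] EuclideanSpace ℝ (Fin n) :=
  ν.subtypeL.comp (ν.orthogonalProjectionOnto)


/-- There is a set of `m` indices carrying the `m` largest values of `g`. -/
lemma exists_topk {n : ℕ} (g : Fin n → ℝ) (m : ℕ) (hm : m ≤ n) :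
    ∃ T : Finset (Fin n), T.card = m ∧ ∀ i ∈ T, ∀ j ∉ T, g j ≤ g i := by
  induction m with
  | zero => exact ⟨∅, rfl, by simp⟩
  | succ m ih =>
    obtain ⟨T, hcard, hsep⟩ := ih (by omega)
    have hne : (Tᶜ : Finset (Fin n)).Nonempty := by
      rw [← Finset.card_pos, Finset.card_compl, hcard]
      simp only [Fintype.card_fin]; omega
    obtain ⟨j₀, hj₀, hmax⟩ := Finset.exists_max_image Tᶜ g hne
    have hj₀T : j₀ ∉ T := by simpa using hj₀
    refine ⟨insert j₀ T, ?_, ?_⟩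
    · rw [Finset.card_insert_of_notMem hj₀T, hcard]
    · intro i hi j hj
      have hjT : j ∉ T := fun h => hj (Finset.mem_insert_of_mem h)
      rcases Finset.mem_insert.1 hi with rfl | hiT
      · exact hmax j (by simpa using hjT)
      · exact hsep i hiT j hjT

lemma sum_le_sum_cross {α : Type*} (X Y : Finset α) (h : α → ℝ)
    (hcard : X.card ≤ Y.card) (hnn : ∀ a, 0 ≤ h a)
    (hxy : ∀ x ∈ X, ∀ y ∈ Y, h x ≤ h y) :
    ∑ x ∈ X, h x ≤ ∑ y ∈ Y, h y := by
  obtain ⟨U, hUY, hUcard⟩ := Finset.exists_subset_card_eq hcard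
  have h1 : ∑ x ∈ X, h x ≤ ∑ u ∈ U, h u := by
    rcases Nat.eq_zero_or_pos X.card with h0 | hpos
    · rw [Finset.card_eq_zero.mp h0, Finset.sum_empty]
      exact Finset.sum_nonneg fun u _ => hnn u
    · have key : ∑ x ∈ X, ∑ _u ∈ U, h x ≤ ∑ x ∈ X, ∑ u ∈ U, h u :=
        Finset.sum_le_sum fun x hx => Finset.sum_le_sum fun u hu => hxy x hx u (hUY hu)
      have l1 : ∑ x ∈ X, ∑ _u ∈ U, h x = (X.card : ℝ) * ∑ x ∈ X, h x := by
        simp [Finset.sum_const, hUcard, nsmul_eq_mul, Finset.mul_sum, ← Finset.sum_mul, mul_comm]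
      have l2 : ∑ _x ∈ X, ∑ u ∈ U, h u = (X.card : ℝ) * ∑ u ∈ U, h u := by
        simp [Finset.sum_const, nsmul_eq_mul]
      rw [l1, l2] at key
      have : (0 : ℝ) < X.card := by exact_mod_cast hpos
      exact le_of_mul_le_mul_left key this
  exact h1.trans (Finset.sum_le_sum_of_subset_of_nonneg hUY fun y _ _ => hnn y)

/-- If `T'` carries the largest values of a nonnegative `h`, its sum dominates the
sum over any set of at most the same cardinality. -/
lemma sum_le_topk {n : ℕ} (T' S : Finset (Fin n)) (h : Fin n → ℝ)
    (hnn : ∀ a, 0 ≤ h a) (hsep : ∀ i ∈ T', ∀ j ∉ T', h j ≤ h i)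
    (hcard : S.card ≤ T'.card) : ∑ i ∈ S, h i ≤ ∑ i ∈ T', h i := by
  have e1 : ∑ i ∈ S \ T', h i + ∑ i ∈ S ∩ T', h i = ∑ i ∈ S, h i := by
    rw [← Finset.sdiff_inter_self_left S T']
    exact Finset.sum_sdiff Finset.inter_subset_left
  have e2 : ∑ i ∈ T' \ S, h i + ∑ i ∈ T' ∩ S, h i = ∑ i ∈ T', h i := by
    rw [← Finset.sdiff_inter_self_left T' S]
    exact Finset.sum_sdiff Finset.inter_subset_left
  have hc1 : (S ∩ T').card + (S \ T').card = S.card := by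
    rw [Finset.card_inter_add_card_sdiff]
  have hc2 : (T' ∩ S).card + (T' \ S).card = T'.card := by
    rw [Finset.card_inter_add_card_sdiff]
  have hic : (S ∩ T').card = (T' ∩ S).card := by rw [Finset.inter_comm]
  have hmid : ∑ i ∈ S \ T', h i ≤ ∑ i ∈ T' \ S, h i := by
    refine sum_le_sum_cross _ _ h (by omega) hnn ?_
    intro x hx y hy
    exact hsep y (Finset.mem_sdiff.1 hy).1 x (Finset.mem_sdiff.1 hx).2
  have : ∑ i ∈ S ∩ T', h i = ∑ i ∈ T' ∩ S, h i := by rw [Finset.inter_comm]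
  linarith

section PtBounds

variable {F : ℝ → ℝ} {p : ℝ}

lemma F_upper (hp0 : 0 < p)
    (hratio : ∀ s t : ℝ, 0 < s → s ≤ t → F t / t ^ p ≤ F s / s ^ p)
    {t₀ : ℝ} (ht₀ : 0 < t₀) {s : ℝ} (hs : t₀ ≤ s) :
    F s ≤ F t₀ / t₀ ^ p * s ^ p := by
  have hsp : (0 : ℝ) < s ^ p := Real.rpow_pos_of_pos (lt_of_lt_of_le ht₀ hs) p
  have := hratio t₀ s ht₀ hs
  calc F s = F s / s ^ p * s ^ p := by field_simp
    _ ≤ F t₀ / t₀ ^ p * s ^ p := by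
        exact mul_le_mul_of_nonneg_right this hsp.le

lemma F_lower (hF : SparsenessMeasure F) (hp0 : 0 < p)
    (hratio : ∀ s t : ℝ, 0 < s → s ≤ t → F t / t ^ p ≤ F s / s ^ p)
    {t₀ : ℝ} (ht₀ : 0 < t₀) {s : ℝ} (hs0 : 0 ≤ s) (hs : s ≤ t₀) :
    F t₀ / t₀ ^ p * s ^ p ≤ F s := by
  rcases eq_or_lt_of_le hs0 with h | h
  · rw [← h, Real.zero_rpow hp0.ne', mul_zero]
    exact hF.1 0 le_rfl
  · have hsp : (0 : ℝ) < s ^ p := Real.rpow_pos_of_pos h p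
    have := hratio s t₀ h hs
    calc F t₀ / t₀ ^ p * s ^ p ≤ F s / s ^ p * s ^ p :=
          mul_le_mul_of_nonneg_right this hsp.le
      _ = F s := by field_simp

lemma c_pos (hF : SparsenessMeasure F) (hp0 : 0 < p) {t₀ : ℝ} (ht₀ : 0 < t₀) :
    0 < F t₀ / t₀ ^ p := by
  apply div_pos
  · rcases (hF.1 t₀ ht₀.le).lt_or_eq with h | h
    · exact h
    · exact absurd ((hF.2.1 t₀ ht₀.le).1 h.symm) ht₀.ne'
  · exact Real.rpow_pos_of_pos ht₀ p
end PtBounds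

/-- Forward key lemma: strict `ℓ_p` NSP inequality on a top set implies the
strict `F` inequality. -/
lemma key_forward {n : ℕ} {F : ℝ → ℝ} {p : ℝ} (hF : SparsenessMeasure F) (hp0 : 0 < p)
    (hratio : ∀ s t : ℝ, 0 < s → s ≤ t → F t / t ^ p ≤ F s / s ^ p)
    (z : Fin n → ℝ) (T' : Finset (Fin n))
    (hsep : ∀ i ∈ T', ∀ j ∉ T', |z j| ≤ |z i|) (hne : T'.Nonempty)
    (hlt : ∑ i ∈ T', |z i| ^ p < ∑ i ∈ T'ᶜ, |z i| ^ p) :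
    ∑ i ∈ T', F |z i| < ∑ i ∈ T'ᶜ, F |z i| := by
  obtain ⟨i₀, hi₀, hmin⟩ := Finset.exists_min_image T' (fun i => |z i|) hne
  set t₀ := |z i₀| with ht₀def
  rcases (abs_nonneg (z i₀)).lt_or_eq with ht₀ | ht₀
  · set c := F t₀ / t₀ ^ p with hc
    have hcpos := c_pos hF hp0 ht₀
    have h1 : ∑ i ∈ T', F |z i| ≤ c * ∑ i ∈ T', |z i| ^ p := by
      rw [Finset.mul_sum]
      exact Finset.sum_le_sum fun i hi => F_upper hp0 hratio ht₀ (hmin i hi)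
    have h2 : c * ∑ i ∈ T'ᶜ, |z i| ^ p ≤ ∑ i ∈ T'ᶜ, F |z i| := by
      rw [Finset.mul_sum]
      refine Finset.sum_le_sum fun j hj => ?_
      exact F_lower hF hp0 hratio ht₀ (abs_nonneg _)
        (hsep i₀ hi₀ j (by simpa using hj))
    have h3 : c * ∑ i ∈ T', |z i| ^ p < c * ∑ i ∈ T'ᶜ, |z i| ^ p :=
      (mul_lt_mul_iff_right₀ hcpos).2 hlt
    linarith
  · -- t₀ = 0 : everything outside T' vanishes, contradicting hlt
    exfalso
    have hz0 : ∀ j ∈ T'ᶜ, |z j| ^ p = 0 := by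
      intro j hj
      have : |z j| ≤ 0 := ht₀ ▸ hsep i₀ hi₀ j (by simpa using hj)
      rw [le_antisymm this (abs_nonneg _), Real.zero_rpow hp0.ne']
    rw [Finset.sum_eq_zero hz0] at hlt
    exact absurd hlt (not_lt.2 (Finset.sum_nonneg fun i _ => Real.rpow_nonneg (abs_nonneg _) p))

/-- Backward key lemma: a weak `F` violation on a top set implies a weak `ℓ_p`
violation. -/
lemma key_backward {n : ℕ} {F : ℝ → ℝ} {p : ℝ} (hF : SparsenessMeasure F) (hp0 : 0 < p)
    (hratio : ∀ s t : ℝ, 0 < s → s ≤ t → F t / t ^ p ≤ F s / s ^ p)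
    (z : Fin n → ℝ) (T' : Finset (Fin n))
    (hsep : ∀ i ∈ T', ∀ j ∉ T', |z j| ≤ |z i|)
    (hle : ∑ i ∈ T'ᶜ, F |z i| ≤ ∑ i ∈ T', F |z i|) :
    ∑ i ∈ T'ᶜ, |z i| ^ p ≤ ∑ i ∈ T', |z i| ^ p := by
  have hRnn : 0 ≤ ∑ i ∈ T', |z i| ^ p :=
    Finset.sum_nonneg fun i _ => Real.rpow_nonneg (abs_nonneg _) p
  rcases T'.eq_empty_or_nonempty with rfl | hne
  · -- all `F |z i|` vanish, hence `z = 0` on the complement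
    simp only [Finset.sum_empty] at hle
    have hall := (Finset.sum_eq_zero_iff_of_nonneg
        (fun i _ => hF.1 _ (abs_nonneg (z i)))).1
        (le_antisymm hle (Finset.sum_nonneg fun i _ => hF.1 _ (abs_nonneg (z i))))
    have : ∑ i ∈ (∅ : Finset (Fin n))ᶜ, |z i| ^ p = 0 := by
      refine Finset.sum_eq_zero fun j hj => ?_
      have hz : |z j| = 0 := (hF.2.1 _ (abs_nonneg _)).1 (hall j hj)
      rw [hz, Real.zero_rpow hp0.ne']
    rw [this]
    exact hRnn
  · obtain ⟨i₀, hi₀, hmin⟩ := Finset.exists_min_image T' (fun i => |z i|) hne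
    set t₀ := |z i₀| with ht₀def
    rcases (abs_nonneg (z i₀)).lt_or_eq with ht₀ | ht₀
    · set c := F t₀ / t₀ ^ p with hc
      have hcpos := c_pos hF hp0 ht₀
      have h1 : ∑ i ∈ T', F |z i| ≤ c * ∑ i ∈ T', |z i| ^ p := by
        rw [Finset.mul_sum]
        exact Finset.sum_le_sum fun i hi => F_upper hp0 hratio ht₀ (hmin i hi)
      have h2 : c * ∑ i ∈ T'ᶜ, |z i| ^ p ≤ ∑ i ∈ T'ᶜ, F |z i| := by
        rw [Finset.mul_sum]
        exact Finset.sum_le_sum fun j hj =>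
          F_lower hF hp0 hratio ht₀ (abs_nonneg _) (hsep i₀ hi₀ j (by simpa using hj))
      have : c * ∑ i ∈ T'ᶜ, |z i| ^ p ≤ c * ∑ i ∈ T', |z i| ^ p := by linarith
      exact le_of_mul_le_mul_left this hcpos
    · have hz0 : ∀ j ∈ T'ᶜ, |z j| ^ p = 0 := by
        intro j hj
        have : |z j| ≤ 0 := ht₀ ▸ hsep i₀ hi₀ j (by simpa using hj)
        rw [le_antisymm this (abs_nonneg _), Real.zero_rpow hp0.ne']
      rw [Finset.sum_eq_zero hz0]
      exact hRnn

/-- Corollary 5: if `F` is a non-decreasing sparseness measure and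
`F(t)/t^p` is non-increasing on `(0,∞)` for some `0 < p ≤ 1`, then (i) NSP for the
`ℓ_p` cost implies NSP for `J_F` (for any subspace), and (ii) RRC for the `ℓ_p` cost
implies RRC for `J_F` (for any matrix, with some constants). -/
theorem stmt15 {n : ℕ} (F : ℝ → ℝ) (hF : SparsenessMeasure F)
    (p : ℝ) (hp0 : 0 < p) (hp1 : p ≤ 1)
    (hFmono : ∀ s t : ℝ, 0 ≤ s → s ≤ t → F s ≤ F t)
    (hratio : ∀ s t : ℝ, 0 < s → s ≤ t → F t / t ^ p ≤ F s / s ^ p)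
    (k : ℕ) (hk : 1 ≤ k) :
    (∀ ν : Submodule ℝ (EuclideanSpace ℝ (Fin n)),
      NSP ν k (fun t => |t| ^ p) → NSP ν k F) ∧
    (∀ m : ℕ, ∀ A : Matrix (Fin m) (Fin n) ℝ,
      (∃ C > 0, RRC A k (fun t => |t| ^ p) C) → (∃ C > 0, RRC A k F C)) := by
  have hF0 : F 0 = 0 := (hF.2.1 0 le_rfl).mpr rfl
  have hFnn : ∀ t : ℝ, 0 ≤ F |t| := fun t => hF.1 _ (abs_nonneg t)
  constructor
  · -- part (i)
    intro ν hNSP z hz hz0 T hT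
    obtain ⟨T', hT'card, hsep⟩ := exists_topk (fun i => |z i|) (min k n) (min_le_right k n)
    have hn1 : 1 ≤ n := by
      by_contra hn
      push_neg at hn
      interval_cases n
      exact hz0 (by ext i; exact i.elim0)
    have hT'ne : T'.Nonempty := by
      rw [← Finset.card_pos, hT'card]
      omega
    have hp := hNSP z hz hz0 T' (hT'card ▸ min_le_left k n)
    simp only [costJT, abs_abs] at hp ⊢
    have hfwd : ∑ i ∈ T', F |z i| < ∑ i ∈ T'ᶜ, F |z i| :=
      key_forward hF hp0 hratio (fun i => z i) T' hsep hT'ne hp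
    have hB : ∑ i ∈ T, F |z i| ≤ ∑ i ∈ T', F |z i| := by
      refine sum_le_topk T' T (fun i => F |z i|) (fun i => hFnn _) ?_ ?_
      · intro i hi j hj
        exact hFmono _ _ (abs_nonneg _) (hsep i hi j hj)
      · rw [hT'card]
        refine le_min hT (le_trans (Finset.card_le_univ T) (by simp))
    have htot : ∑ i ∈ T, F |z i| + ∑ i ∈ Tᶜ, F |z i|
        = ∑ i ∈ T', F |z i| + ∑ i ∈ T'ᶜ, F |z i| := by
      rw [Finset.sum_add_sum_compl, Finset.sum_add_sum_compl]
    linarith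
  · -- part (ii)
    rintro m A ⟨C, hC, hRRC⟩
    refine ⟨2 * C, by positivity, ?_⟩
    rintro xbar ⟨T, hTcard, hTsupp⟩ ε hε v hv xhat hfeas hcost
    set h : EuclideanSpace ℝ (Fin n) := xhat - xbar with hh
    have happ : ∀ i, h i = xhat i - xbar i := fun i => rfl
    -- Step a : weak F-violation of h on T
    have hsub : ∀ i, F |xbar i| ≤ F |xhat i| + F |h i| := by
      intro i
      have key := hF.2.2 (xhat i) (-(h i))
      have e : xhat i + -(h i) = xbar i := by rw [happ]; ring
      rwa [e, abs_neg] at key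
    have hxbarJ : costJ F xbar = ∑ i ∈ T, F |xbar i| := by
      rw [costJ, ← Finset.sum_add_sum_compl T]
      have e : ∑ i ∈ Tᶜ, F |xbar i| = 0 :=
        Finset.sum_eq_zero fun i hi => by
          rw [hTsupp i (by simpa using hi), abs_zero, hF0]
      rw [e, add_zero]
    have hxhatJ : costJ F xhat = ∑ i ∈ T, F |xhat i| + ∑ i ∈ Tᶜ, F |h i| := by
      rw [costJ, ← Finset.sum_add_sum_compl T]
      congr 1
      refine Finset.sum_congr rfl fun i hi => ?_
      rw [happ, hTsupp i (by simpa using hi), sub_zero]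
    have hsum : ∑ i ∈ T, F |xbar i| ≤ ∑ i ∈ T, F |xhat i| + ∑ i ∈ T, F |h i| := by
      rw [← Finset.sum_add_distrib]
      exact Finset.sum_le_sum fun i _ => hsub i
    rw [hxhatJ, hxbarJ] at hcost
    have hstepA : ∑ i ∈ Tᶜ, F |h i| ≤ ∑ i ∈ T, F |h i| := by linarith
    -- Step b : pass to the top-k set T'
    obtain ⟨T', hT'card, hsep⟩ := exists_topk (fun i => |h i|) (min k n) (min_le_right k n)
    have hB1 : ∑ i ∈ T, F |h i| ≤ ∑ i ∈ T', F |h i| := by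
      refine sum_le_topk T' T (fun i => F |h i|) (fun i => hFnn _) ?_ ?_
      · intro i hi j hj
        exact hFmono _ _ (abs_nonneg _) (hsep i hi j hj)
      · rw [hT'card]
        exact le_min hTcard (le_trans (Finset.card_le_univ T) (by simp))
    have htot : ∑ i ∈ T, F |h i| + ∑ i ∈ Tᶜ, F |h i|
        = ∑ i ∈ T', F |h i| + ∑ i ∈ T'ᶜ, F |h i| := by
      rw [Finset.sum_add_sum_compl, Finset.sum_add_sum_compl]
    have hstepB : ∑ i ∈ T'ᶜ, F |h i| ≤ ∑ i ∈ T', F |h i| := by linarith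
    -- Step c : weak ℓ_p violation on T'
    have hstepC : ∑ i ∈ T'ᶜ, |h i| ^ p ≤ ∑ i ∈ T', |h i| ^ p :=
      key_backward hF hp0 hratio (fun i => h i) T' hsep hstepB
    -- Step d : apply the ℓ_p RRC to h_{T'} and -h_{T'ᶜ}
    set xbar' : EuclideanSpace ℝ (Fin n) := WithLp.toLp 2 (fun i => if i ∈ T' then h i else 0) with hxbar'
    set xhat' : EuclideanSpace ℝ (Fin n) := xbar' - h with hxhat'
    have hxbar'app : ∀ i, xbar' i = if i ∈ T' then h i else 0 := fun i => rfl
    have hxhat'app : ∀ i, xhat' i = if i ∈ T' then 0 else -(h i) := by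
      intro i
      have : xhat' i = xbar' i - h i := rfl
      rw [this, hxbar'app]
      by_cases hi : i ∈ T' <;> simp [hi]
    have hsp : Sparse k xbar' := by
      refine ⟨T', ?_, fun i hi => by rw [hxbar'app, if_neg hi]⟩
      rw [hT'card]
      exact min_le_left k n
    have hcJ2 : costJ (fun t => |t| ^ p) xbar' = ∑ i ∈ T', |h i| ^ p := by
      rw [costJ, ← Finset.sum_add_sum_compl T']
      have e1 : ∑ i ∈ T', |(|xbar' i|)| ^ p = ∑ i ∈ T', |h i| ^ p :=
        Finset.sum_congr rfl fun i hi => by rw [hxbar'app, if_pos hi, abs_abs]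
      have e2 : ∑ i ∈ T'ᶜ, |(|xbar' i|)| ^ p = 0 :=
        Finset.sum_eq_zero fun i hi => by
          rw [hxbar'app, if_neg (by simpa using hi), abs_zero, abs_zero,
            Real.zero_rpow hp0.ne']
      rw [e1, e2, add_zero]
    have hcJ1 : costJ (fun t => |t| ^ p) xhat' = ∑ i ∈ T'ᶜ, |h i| ^ p := by
      rw [costJ, ← Finset.sum_add_sum_compl T']
      have e1 : ∑ i ∈ T', |(|xhat' i|)| ^ p = 0 :=
        Finset.sum_eq_zero fun i hi => by
          rw [hxhat'app, if_pos hi, abs_zero, abs_zero, Real.zero_rpow hp0.ne']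
      have e2 : ∑ i ∈ T'ᶜ, |(|xhat' i|)| ^ p = ∑ i ∈ T'ᶜ, |h i| ^ p :=
        Finset.sum_congr rfl fun i hi => by
          rw [hxhat'app, if_neg (by simpa using hi), abs_neg, abs_abs]
      rw [e1, e2, zero_add]
    have hcost' : costJ (fun t => |t| ^ p) xhat' ≤ costJ (fun t => |t| ^ p) xbar' := by
      rw [hcJ1, hcJ2]
      exact hstepC
    set v' : EuclideanSpace ℝ (Fin m) := mulVecCLM A xhat' - mulVecCLM A xbar' with hv'def
    have hv'eq : v' = mulVecCLM A xbar - mulVecCLM A xhat := by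
      rw [hv'def, ← map_sub]
      have : xhat' - xbar' = xbar - xhat := by rw [hxhat', hh]; abel
      rw [this, map_sub]
    have hv'norm : ‖v'‖ ≤ 2 * ε := by
      have e : v' = -((mulVecCLM A xhat - (mulVecCLM A xbar + v)) + v) := by
        rw [hv'eq]; abel
      rw [e, norm_neg]
      calc ‖(mulVecCLM A xhat - (mulVecCLM A xbar + v)) + v‖
          ≤ ‖mulVecCLM A xhat - (mulVecCLM A xbar + v)‖ + ‖v‖ := norm_add_le _ _
        _ ≤ ε + ε := add_le_add hfeas hv
        _ = 2 * ε := by ring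
    have hfeas' : ‖mulVecCLM A xhat' - (mulVecCLM A xbar' + v')‖ ≤ 2 * ε := by
      have e : mulVecCLM A xhat' - (mulVecCLM A xbar' + v') = 0 := by
        rw [hv'def]; abel
      rw [e, norm_zero]
      positivity
    have hres := hRRC xbar' hsp (2 * ε) (by linarith) v' hv'norm xhat' hfeas' hcost'
    have e : xbar - xhat = -(xbar' - xhat') := by
      rw [hxhat', hh]; abel
    rw [e, norm_neg]
    calc ‖xbar' - xhat'‖ ≤ C * (2 * ε) := hres
      _ = 2 * C * ε := by ring
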